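/- Let H be a real Hilbert space, λ ∈ ℝ, and let Φ : H → (−∞,+∞] be proper, λ-convex, and lower semicontinuous. Then the operator ∂^λΦ is (−λ)-m-accretive on H. -/

import Mathlib

open scoped RealInnerProductSpace

/-- An operator `A ⊆ X × X` on a real normed space is *accretive* if for all
`(x,y), (x̂,ŷ) ∈ A` and all `λ > 0`, `‖x − x̂ + λ(y − ŷ)‖ ≥ ‖x − x̂‖`. -/
def Accretive {X : Type*} [NormedAddCommGroup X] [NormedSpace ℝ X] (A : Set (X × X)) : Prop :=
  ∀ p ∈ A, ∀ q ∈ A, ∀ c : ℝ, 0 < c → ‖p.1 - q.1‖ ≤ ‖p.1 - q.1 + c • (p.2 - q.2)‖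

/-- The identity operator `I_X = {(x,x) | x ∈ X}`. -/
def idOp (X : Type*) : Set (X × X) := {p | p.2 = p.1}

/-- Sum of operators: `A + B = {(x, y+z) | (x,y) ∈ A, (x,z) ∈ B}`. -/
def opAdd {X : Type*} [Add X] (A B : Set (X × X)) : Set (X × X) :=
  {p | ∃ y z, (p.1, y) ∈ A ∧ (p.1, z) ∈ B ∧ p.2 = y + z}

/-- Scalar multiple of an operator: `λA = {(x, λy) | (x,y) ∈ A}`. -/
def opSMul {X : Type*} [SMul ℝ X] (c : ℝ) (A : Set (X × X)) : Set (X × X) :=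
  {p | ∃ y, (p.1, y) ∈ A ∧ p.2 = c • y}

/-- The range of an operator. -/
def opRange {X : Type*} (A : Set (X × X)) : Set X := {y | ∃ x, (x, y) ∈ A}

/-- An operator is *m-accretive* if it is accretive and `Range(I_X + λA) = X` for all `λ > 0`. -/
def MAccretive {X : Type*} [NormedAddCommGroup X] [NormedSpace ℝ X] (A : Set (X × X)) : Prop :=
  Accretive A ∧ ∀ c : ℝ, 0 < c → opRange (opAdd (idOp X) (opSMul c A)) = Set.univ

/-- An operator `A` is *ω-m-accretive* if `A + ωI_X` is m-accretive. -/
def OmegaMAccretive {X : Type*} [NormedAddCommGroup X] [NormedSpace ℝ X]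
    (ω : ℝ) (A : Set (X × X)) : Prop :=
  MAccretive (opAdd A (opSMul ω (idOp X)))

/-- The subdifferential of `Φ : H → (−∞,+∞]`:
`∂Φ = {(x,y) | ∀ h, Φ(x+h) ≥ Φ(x) + ⟨y,h⟩}`. -/
def subdiff {H : Type*} [NormedAddCommGroup H] [InnerProductSpace ℝ H]
    (Φ : H → EReal) : Set (H × H) :=
  {p | ∀ h : H, Φ p.1 + ((⟪p.2, h⟫ : ℝ) : EReal) ≤ Φ (p.1 + h)}

/-- The adjusted subdifferential `∂^λΦ := ∂(Φ − (λ/2)‖·‖²) + λ I_H`. -/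
def subdiffL {H : Type*} [NormedAddCommGroup H] [InnerProductSpace ℝ H]
    (l : ℝ) (Φ : H → EReal) : Set (H × H) :=
  opAdd (subdiff (fun x => Φ x - (((l / 2) * ‖x‖ ^ 2 : ℝ) : EReal))) (opSMul l (idOp H))

/-- `Φ` is `λ`-convex: `Φ(tx + (1−t)y) ≤ tΦ(x) + (1−t)Φ(y) − (λ/2)t(1−t)‖x−y‖²`. -/
def LambdaConvex {H : Type*} [NormedAddCommGroup H] [NormedSpace ℝ H]
    (l : ℝ) (Φ : H → EReal) : Prop :=
  ∀ x y : H, ∀ t : ℝ, t ∈ Set.Icc (0 : ℝ) 1 →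
    Φ (t • x + (1 - t) • y) ≤
      (t : EReal) * Φ x + ((1 - t : ℝ) : EReal) * Φ y
        - (((l / 2) * t * (1 - t) * ‖x - y‖ ^ 2 : ℝ) : EReal)

section Helpers
variable {H : Type*} [NormedAddCommGroup H] [InnerProductSpace ℝ H]

lemma norm_combo (x y : H) (t : ℝ) :
    ‖t • x + (1 - t) • y‖ ^ 2
      = t * ‖x‖ ^ 2 + (1 - t) * ‖y‖ ^ 2 - t * (1 - t) * ‖x - y‖ ^ 2 := by
  rw [← real_inner_self_eq_norm_sq, ← real_inner_self_eq_norm_sq,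
    ← real_inner_self_eq_norm_sq, ← real_inner_self_eq_norm_sq]
  simp only [inner_add_left, inner_add_right, inner_sub_left, inner_sub_right,
    real_inner_smul_left, real_inner_smul_right]
  rw [real_inner_comm y x]
  ring

lemma esub_ne_bot (a : EReal) (ha : a ≠ ⊥) (r : ℝ) : a - (r : EReal) ≠ ⊥ := by
  induction a using EReal.rec with
  | bot => exact absurd rfl ha
  | coe q => rw [← EReal.coe_sub]; exact EReal.coe_ne_bot _
  | top => rw [EReal.top_sub_coe]; exact (by simp)

lemma esub_eq_top_iff (a : EReal) (r : ℝ) : a - (r : EReal) = ⊤ ↔ a = ⊤ := by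
  induction a using EReal.rec with
  | bot => simp [EReal.bot_sub]
  | coe q => exact iff_of_false (by rw [← EReal.coe_sub]; exact EReal.coe_ne_top _) (EReal.coe_ne_top _)
  | top => simp [EReal.top_sub_coe]

lemma eadd_ne_bot (a : EReal) (ha : a ≠ ⊥) (r : ℝ) : a + (r : EReal) ≠ ⊥ := by
  induction a using EReal.rec with
  | bot => exact absurd rfl ha
  | coe q => rw [← EReal.coe_add]; exact EReal.coe_ne_bot _
  | top => rw [EReal.top_add_coe]; exact (by simp)

lemma emul_ne_bot (t : ℝ) (ht : 0 < t) (a : EReal) (ha : a ≠ ⊥) : (t : EReal) * a ≠ ⊥ := by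
  induction a using EReal.rec with
  | bot => exact absurd rfl ha
  | coe q => rw [← EReal.coe_mul]; exact EReal.coe_ne_bot _
  | top => rw [EReal.coe_mul_top_of_pos ht]; exact (by simp)

end Helpers


lemma exists_min {H : Type*} [NormedAddCommGroup H] [InnerProductSpace ℝ H] [CompleteSpace H]
    (G : H → EReal) (α : ℝ) (hα : 0 < α)
    (hbot : ∀ x, G x ≠ ⊥) (x0 : H) (hx0 : G x0 ≠ ⊤)
    (hlsc : LowerSemicontinuous G)
    (hsc : ∀ x y : H, ∀ t : ℝ, 0 < t → t < 1 →
      G (t • x + (1 - t) • y) ≤ (t : EReal) * G x + ((1 - t : ℝ) : EReal) * G y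
        - ((α / 2 * t * (1 - t) * ‖x - y‖ ^ 2 : ℝ) : EReal)) :
    ∃ x : H, ∀ z : H, G x ≤ G z := by
  set r0 : ℝ := (G x0).toReal with hr0
  have hx0' : G x0 = ((r0 : ℝ) : EReal) := (EReal.coe_toReal hx0 (hbot x0)).symm
  -- lsc at x0 gives a ball where G > r0 - 1
  have hev : ∀ᶠ z in nhds x0, ((r0 - 1 : ℝ) : EReal) < G z := by
    apply hlsc x0
    rw [hx0']
    exact_mod_cast sub_one_lt r0
  obtain ⟨δ, hδ0, hball⟩ := Metric.eventually_nhds_iff.1 hev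
  -- global lower bound
  set M : ℝ := r0 - 1 - 4 / (α * δ ^ 2) with hMdef
  have hαδ : (0:ℝ) < α * δ ^ 2 := by positivity
  have hM : ∀ z : H, ((M : ℝ) : EReal) ≤ G z := by
    intro z
    by_cases hz : G z = ⊤
    · rw [hz]; exact le_top
    have hz' : G z = (((G z).toReal : ℝ) : EReal) := (EReal.coe_toReal hz (hbot z)).symm
    set rz : ℝ := (G z).toReal
    by_cases hnear : dist z x0 < δ
    · have h1 := hball hnear
      rw [hz'] at h1 ⊢
      have h2 : (r0 - 1 : ℝ) < rz := by exact_mod_cast h1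
      have h3 : M ≤ r0 - 1 := by
        have : (0:ℝ) ≤ 4 / (α * δ ^ 2) := by positivity
        rw [hMdef]; linarith
      exact_mod_cast h3.trans h2.le
    push_neg at hnear
    rw [dist_eq_norm] at hnear
    set R : ℝ := ‖z - x0‖ with hRdef
    have hR0 : 0 < R := lt_of_lt_of_le hδ0 hnear
    set t : ℝ := δ / (2 * R) with htdef
    have ht0 : 0 < t := by positivity
    have htR : t * (2 * R) = δ := by rw [htdef]; field_simp
    have ht2 : t ≤ 1 / 2 := by
      rw [htdef, div_le_div_iff₀ (by positivity) (by norm_num)]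
      linarith
    have ht1 : t < 1 := by linarith
    have hp : dist (t • z + (1 - t) • x0) x0 < δ := by
      have : t • z + (1 - t) • x0 - x0 = t • (z - x0) := by
        rw [smul_sub]; module
      rw [dist_eq_norm, this, norm_smul, Real.norm_eq_abs, abs_of_pos ht0, ← hRdef]
      nlinarith
    have h1 := hball hp
    have h2 := hsc z x0 t ht0 ht1
    rw [hz', hx0'] at h2
    have h3 : G (t • z + (1 - t) • x0)
        ≤ ((t * rz + (1 - t) * r0 - α / 2 * t * (1 - t) * R ^ 2 : ℝ) : EReal) := by
      rw [← hRdef] at h2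
      exact h2.trans_eq (by norm_cast)
    have h4 : (r0 - 1 : ℝ) < t * rz + (1 - t) * r0 - α / 2 * t * (1 - t) * R ^ 2 := by
      exact_mod_cast h1.trans_le h3
    rw [hz']
    have hδ2 : δ ^ 2 = 4 * t ^ 2 * R ^ 2 := by rw [← htR]; ring
    have hgoal : M ≤ rz := by
      rw [hMdef, sub_le_iff_le_add, ← sub_le_iff_le_add']
      rw [le_div_iff₀ hαδ]
      rw [hδ2]
      have key : 4 * α * t * R ^ 2 * (t * (r0 - rz))
          ≤ 4 * α * t * R ^ 2 * (1 - α / 2 * t * (1 - t) * R ^ 2) := by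
        apply mul_le_mul_of_nonneg_left _ (by positivity)
        nlinarith
      nlinarith [key, sq_nonneg (α * t * R ^ 2 - 2),
        mul_nonneg (sq_nonneg (α * t * R ^ 2)) (by linarith : (0:ℝ) ≤ 1 - 2 * t)]
    exact_mod_cast hgoal
  -- the infimum
  set m : EReal := ⨅ z : H, G z with hmdef
  have hmM : ((M : ℝ) : EReal) ≤ m := le_iInf hM
  have hmub : m ≤ G x0 := iInf_le _ _
  have hmtop : m ≠ ⊤ := fun h => hx0 (top_le_iff.1 (h ▸ hmub))
  have hmbot : m ≠ ⊥ := fun h => by simp [h] at hmM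
  set mr : ℝ := m.toReal with hmr
  have hm' : m = ((mr : ℝ) : EReal) := (EReal.coe_toReal hmtop hmbot).symm
  -- minimizing sequence
  have hseq : ∀ n : ℕ, ∃ z : H, G z < ((mr + 1 / (n + 1) : ℝ) : EReal) := by
    intro n
    have : m < ((mr + 1 / (n + 1) : ℝ) : EReal) := by
      rw [hm']; exact_mod_cast lt_add_of_pos_right mr (by positivity)
    exact iInf_lt_iff.1 this
  choose z hz using hseq
  have hzreal : ∀ n, G (z n) = (((G (z n)).toReal : ℝ) : EReal) := by
    intro n
    refine (EReal.coe_toReal (fun h => ?_) (hbot _)).symm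
    have h2 := hz n; rw [h] at h2; exact not_top_lt h2
  set g : ℕ → ℝ := fun n => (G (z n)).toReal with hg
  have hglt : ∀ n, g n < mr + 1 / (n + 1) := by
    intro n; have := hz n; rw [hzreal n] at this; exact_mod_cast this
  have hgge : ∀ n, mr ≤ g n := by
    intro n
    have h1 : m ≤ G (z n) := iInf_le _ _
    rw [hm', hzreal n] at h1; exact_mod_cast h1
  -- Cauchy
  have hdist : ∀ n k : ℕ, α / 8 * dist (z n) (z k) ^ 2 ≤ 1 / (n + 1) / 2 + 1 / (k + 1) / 2 := by
    intro n k
    have h2 := hsc (z n) (z k) (1/2) (by norm_num) (by norm_num)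
    rw [hzreal n, hzreal k] at h2
    have h3 : m ≤ G ((1/2 : ℝ) • z n + (1 - 1/2 : ℝ) • z k) := iInf_le _ _
    rw [hm'] at h3
    have h4 : ((mr : ℝ) : EReal)
        ≤ (((1/2) * g n + (1 - 1/2) * g k - α / 2 * (1/2) * (1 - 1/2) * ‖z n - z k‖ ^ 2 : ℝ) : EReal) := by
      refine h3.trans (h2.trans_eq ?_)
      norm_cast
    have h5 : mr ≤ (1/2) * g n + (1 - 1/2) * g k - α / 2 * (1/2) * (1 - 1/2) * ‖z n - z k‖ ^ 2 := by
      exact_mod_cast h4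
    have h6 := hglt n; have h7 := hglt k
    rw [dist_eq_norm]
    nlinarith
  have hcauchy : CauchySeq z := by
    apply cauchySeq_of_le_tendsto_0 (fun N : ℕ => Real.sqrt (8 / α * (1 / (N + 1))))
    · intro n k N hn hk
      have h1 : 1 / ((n:ℝ) + 1) ≤ 1 / (N + 1) := by
        apply one_div_le_one_div_of_le (by positivity); exact_mod_cast by omega
      have h2 : 1 / ((k:ℝ) + 1) ≤ 1 / (N + 1) := by
        apply one_div_le_one_div_of_le (by positivity); exact_mod_cast by omega
      have h3 := hdist n k
      have h4 : dist (z n) (z k) ^ 2 ≤ 8 / α * (1 / (N + 1)) := by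
        rw [div_mul_eq_mul_div, le_div_iff₀ hα]
        nlinarith
      calc dist (z n) (z k) = Real.sqrt (dist (z n) (z k) ^ 2) :=
            (Real.sqrt_sq dist_nonneg).symm
        _ ≤ _ := Real.sqrt_le_sqrt h4
    · apply Filter.Tendsto.comp (Real.continuous_sqrt.tendsto' 0 0 Real.sqrt_zero)
      have := tendsto_one_div_add_atTop_nhds_zero_nat (𝕜 := ℝ)
      have h := this.const_mul (8 / α)
      simpa using h
  obtain ⟨x, hx⟩ := cauchySeq_tendsto_of_complete hcauchy
  refine ⟨x, fun w => ?_⟩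
  have hGx : G x ≤ m := by
    by_contra hcon
    push_neg at hcon
    obtain ⟨y, hy1, hy2⟩ := exists_between hcon
    have hytop : y ≠ ⊤ := (hy2.trans_le le_top).ne
    have hybot : y ≠ ⊥ := by
      intro h; rw [h] at hy1; exact (not_lt_bot (hm' ▸ hy1 : ((mr:ℝ):EReal) < ⊥))
    have hy' : y = ((y.toReal : ℝ) : EReal) := (EReal.coe_toReal hytop hybot).symm
    set yr : ℝ := y.toReal
    have hyrm : mr < yr := by rw [hm', hy'] at hy1; exact_mod_cast hy1
    obtain ⟨N, hN⟩ := exists_nat_one_div_lt (by linarith : (0:ℝ) < yr - mr)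
    have hev2 : ∀ᶠ n in Filter.atTop, y < G (z n) := hx.eventually (hlsc x y hy2)
    obtain ⟨n, hn1, hn2⟩ := (hev2.and (Filter.eventually_ge_atTop N)).exists
    have h1 : g n < yr := by
      have h2 : 1 / ((n:ℝ) + 1) ≤ 1 / (N + 1) := by
        apply one_div_le_one_div_of_le (by positivity); exact_mod_cast by omega
      have := hglt n
      linarith
    have h3 : y < G (z n) := hn1
    rw [hy', hzreal n] at h3
    have : yr < g n := by exact_mod_cast h3
    linarith
  exact hGx.trans (iInf_le _ _)

/-- If `Φ : H → (−∞,+∞]` is proper, `λ`-convex and lower semicontinuous on a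
real Hilbert space `H`, then `∂^λΦ` is `(−λ)`-m-accretive on `H`. -/
theorem subdiffL_omegaMAccretive {H : Type*} [NormedAddCommGroup H]
    [InnerProductSpace ℝ H] [CompleteSpace H] (l : ℝ) (Φ : H → EReal)
    (hbot : ∀ x, Φ x ≠ ⊥) (hproper : ∃ x, Φ x ≠ ⊤)
    (hconv : LambdaConvex l Φ) (hlsc : LowerSemicontinuous Φ) :
    OmegaMAccretive (-l) (subdiffL l Φ) := by
  classical
  obtain ⟨x0, hx0top⟩ := hproper
  set Ψ : H → EReal := fun x => Φ x - (((l / 2) * ‖x‖ ^ 2 : ℝ) : EReal) with hΨdef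
  have hΨbot : ∀ x, Ψ x ≠ ⊥ := fun x => esub_ne_bot _ (hbot x) _
  have hΨtop : ∀ x, (Ψ x = ⊤ ↔ Φ x = ⊤) := fun x => esub_eq_top_iff _ _
  have hΨx0 : Ψ x0 ≠ ⊤ := fun h => hx0top ((hΨtop x0).1 h)
  have hval : ∀ x, Φ x ≠ ⊤ → Ψ x = (((Φ x).toReal - (l / 2) * ‖x‖ ^ 2 : ℝ) : EReal) := by
    intro x hx
    have hxx : Φ x = (((Φ x).toReal : ℝ) : EReal) := (EReal.coe_toReal hx (hbot x)).symm
    rw [hΨdef]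
    simp only
    conv_lhs => rw [hxx]
    exact (EReal.coe_sub _ _).symm
  -- lower semicontinuity of Ψ
  have hΨlsc : LowerSemicontinuous Ψ := by
    have hcont : Continuous fun x : H => (((- ((l / 2) * ‖x‖ ^ 2)) : ℝ) : EReal) := by
      exact continuous_coe_real_ereal.comp
        ((continuous_const.mul (continuous_norm.pow 2)).neg)
    have := hlsc.add' hcont.lowerSemicontinuous (fun x => ?_)
    · simpa [hΨdef, sub_eq_add_neg, EReal.coe_neg] using this
    · apply EReal.continuousAt_add
      · exact Or.inr (EReal.coe_ne_bot _)
      · exact Or.inl (hbot x)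
  -- convexity of Ψ (for t in the open interval)
  have hΨconv : ∀ x y : H, ∀ t : ℝ, 0 < t → t < 1 →
      Ψ (t • x + (1 - t) • y) ≤ (t : EReal) * Ψ x + ((1 - t : ℝ) : EReal) * Ψ y := by
    intro x y t ht0 ht1
    by_cases hx : Φ x = ⊤
    · have hΨx : Ψ x = ⊤ := (hΨtop x).2 hx
      have htop : (t : EReal) * Ψ x + ((1 - t : ℝ) : EReal) * Ψ y = ⊤ := by
        rw [hΨx, EReal.coe_mul_top_of_pos ht0,
          EReal.top_add_of_ne_bot (emul_ne_bot _ (by linarith) _ (hΨbot y))]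
      rw [htop]; exact le_top
    by_cases hy : Φ y = ⊤
    · have hΨy : Ψ y = ⊤ := (hΨtop y).2 hy
      have htop : (t : EReal) * Ψ x + ((1 - t : ℝ) : EReal) * Ψ y = ⊤ := by
        rw [hΨy, EReal.coe_mul_top_of_pos (by linarith : (0:ℝ) < 1 - t),
          EReal.add_top_of_ne_bot (emul_ne_bot _ ht0 _ (hΨbot x))]
      rw [htop]; exact le_top
    · set px : ℝ := (Φ x).toReal
      set py : ℝ := (Φ y).toReal
      have hx' : Φ x = ((px : ℝ) : EReal) := (EReal.coe_toReal hx (hbot x)).symm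
      have hy' : Φ y = ((py : ℝ) : EReal) := (EReal.coe_toReal hy (hbot y)).symm
      have hc := hconv x y t ⟨ht0.le, ht1.le⟩
      rw [hx', hy'] at hc
      have hc' : Φ (t • x + (1 - t) • y)
          ≤ ((t * px + (1 - t) * py - (l / 2) * t * (1 - t) * ‖x - y‖ ^ 2 : ℝ) : EReal) :=
        hc.trans_eq (by norm_cast)
      have h2 : Ψ (t • x + (1 - t) • y)
          ≤ ((t * px + (1 - t) * py - (l / 2) * t * (1 - t) * ‖x - y‖ ^ 2
              - (l / 2) * ‖t • x + (1 - t) • y‖ ^ 2 : ℝ) : EReal) := by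
        rw [hΨdef]
        simp only
        exact (EReal.sub_le_sub hc' (le_refl _)).trans_eq (by norm_cast)
      rw [hval x hx, hval y hy]
      refine h2.trans (le_of_eq ?_)
      rw [← EReal.coe_mul, ← EReal.coe_mul, ← EReal.coe_add, EReal.coe_eq_coe_iff]
      have hn := norm_combo x y t
      linear_combination (-(l / 2)) * hn
  -- every subgradient point has finite value
  have hfin : ∀ p ∈ subdiff Ψ, Ψ p.1 ≠ ⊤ := by
    rintro ⟨x, u⟩ hp h
    have h1 := hp (x0 - x)
    simp only at h1
    rw [h, EReal.top_add_coe] at h1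
    have h2 : Ψ (x + (x0 - x)) = ⊤ := top_le_iff.1 h1
    rw [show x + (x0 - x) = x0 by abel] at h2
    exact hΨx0 h2
  -- monotonicity
  have hmono : ∀ p ∈ subdiff Ψ, ∀ q ∈ subdiff Ψ,
      0 ≤ ⟪p.2 - q.2, p.1 - q.1⟫ := by
    rintro ⟨x, u⟩ hp ⟨y, v⟩ hq
    have hxt : Ψ x ≠ ⊤ := hfin _ hp
    have hyt : Ψ y ≠ ⊤ := hfin _ hq
    set rx : ℝ := (Ψ x).toReal
    set ry : ℝ := (Ψ y).toReal
    have hx' : Ψ x = ((rx : ℝ) : EReal) := (EReal.coe_toReal hxt (hΨbot x)).symm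
    have hy' : Ψ y = ((ry : ℝ) : EReal) := (EReal.coe_toReal hyt (hΨbot y)).symm
    have h1 := hp (y - x)
    have h2 := hq (x - y)
    simp only at h1 h2
    rw [show x + (y - x) = y by abel, hx', hy'] at h1
    rw [show y + (x - y) = x by abel, hx', hy'] at h2
    have h1' : rx + ⟪u, y - x⟫ ≤ ry := by exact_mod_cast h1
    have h2' : ry + ⟪v, x - y⟫ ≤ rx := by exact_mod_cast h2
    simp only [inner_sub_left, inner_sub_right] at h1' h2' ⊢
    linarith
  -- accretivity
  have haccr : Accretive (subdiff Ψ) := by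
    intro p hp q hq c hc
    have hin := hmono p hp q hq
    have hsq : ‖p.1 - q.1‖ ^ 2 ≤ ‖p.1 - q.1 + c • (p.2 - q.2)‖ ^ 2 := by
      rw [norm_add_sq_real, real_inner_smul_right]
      have h3 : ⟪p.1 - q.1, p.2 - q.2⟫ = ⟪p.2 - q.2, p.1 - q.1⟫ := real_inner_comm _ _
      nlinarith [sq_nonneg ‖c • (p.2 - q.2)‖, mul_nonneg hc.le hin]
    nlinarith [norm_nonneg (p.1 - q.1), norm_nonneg (p.1 - q.1 + c • (p.2 - q.2)), hsq]
  -- identification of the operator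
  have hAeq : opAdd (subdiffL l Φ) (opSMul (-l) (idOp H)) = subdiff Ψ := by
    ext p
    obtain ⟨x, v⟩ := p
    constructor
    · rintro ⟨y, z, hy, hz, hv⟩
      obtain ⟨u, s, hu, hs, hy2⟩ := hy
      obtain ⟨w1, hw1, hs2⟩ := hs
      obtain ⟨w2, hw2, hz2⟩ := hz
      simp only [idOp, Set.mem_setOf_eq] at hw1 hw2
      dsimp only at hv hy2 hs2 hz2 hu
      have hveq : v = u := by
        rw [hv, hy2, hs2, hz2, hw1, hw2]; module
      rw [hveq]
      exact hu
    · intro hmem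
      exact ⟨v + l • x, (-l) • x, ⟨v, l • x, hmem, ⟨x, rfl, rfl⟩, rfl⟩, ⟨x, rfl, rfl⟩, by module⟩
  -- surjectivity
  have hrange : ∀ c : ℝ, 0 < c →
      opRange (opAdd (idOp H) (opSMul c (subdiff Ψ))) = Set.univ := by
    intro c hc
    rw [Set.eq_univ_iff_forall]
    intro w
    set G : H → EReal := fun z => Ψ z + ((1 / (2 * c) * ‖z - w‖ ^ 2 : ℝ) : EReal) with hGdef
    have hGbot : ∀ z, G z ≠ ⊥ := fun z => eadd_ne_bot _ (hΨbot z) _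
    have hGval : ∀ z, Ψ z ≠ ⊤ →
        G z = (((Ψ z).toReal + 1 / (2 * c) * ‖z - w‖ ^ 2 : ℝ) : EReal) := by
      intro z hz
      have hzz : Ψ z = (((Ψ z).toReal : ℝ) : EReal) := (EReal.coe_toReal hz (hΨbot z)).symm
      rw [hGdef]
      simp only
      conv_lhs => rw [hzz]
      exact (EReal.coe_add _ _).symm
    have hGtop : G x0 ≠ ⊤ := by
      rw [hGval x0 hΨx0]; exact EReal.coe_ne_top _
    have hGlsc : LowerSemicontinuous G := by
      have hcont : Continuous fun z : H => ((1 / (2 * c) * ‖z - w‖ ^ 2 : ℝ) : EReal) := by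
        exact continuous_coe_real_ereal.comp
          (continuous_const.mul (((continuous_id.sub continuous_const).norm).pow 2))
      exact hΨlsc.add' hcont.lowerSemicontinuous fun x =>
        EReal.continuousAt_add (Or.inr (EReal.coe_ne_bot _)) (Or.inl (hΨbot x))
    have hGsc : ∀ x y : H, ∀ t : ℝ, 0 < t → t < 1 →
        G (t • x + (1 - t) • y) ≤ (t : EReal) * G x + ((1 - t : ℝ) : EReal) * G y
          - (((1 / c) / 2 * t * (1 - t) * ‖x - y‖ ^ 2 : ℝ) : EReal) := by
      intro x y t ht0 ht1
      by_cases hx : Ψ x = ⊤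
      · have hGx : G x = ⊤ := by rw [hGdef]; simp only; rw [hx, EReal.top_add_coe]
        have htop : (t : EReal) * G x + ((1 - t : ℝ) : EReal) * G y
            - (((1 / c) / 2 * t * (1 - t) * ‖x - y‖ ^ 2 : ℝ) : EReal) = ⊤ := by
          rw [hGx, EReal.coe_mul_top_of_pos ht0,
            EReal.top_add_of_ne_bot (emul_ne_bot _ (by linarith) _ (hGbot y)),
            EReal.top_sub_coe]
        rw [htop]; exact le_top
      by_cases hy : Ψ y = ⊤
      · have hGy : G y = ⊤ := by rw [hGdef]; simp only; rw [hy, EReal.top_add_coe]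
        have htop : (t : EReal) * G x + ((1 - t : ℝ) : EReal) * G y
            - (((1 / c) / 2 * t * (1 - t) * ‖x - y‖ ^ 2 : ℝ) : EReal) = ⊤ := by
          rw [hGy, EReal.coe_mul_top_of_pos (by linarith : (0:ℝ) < 1 - t),
            EReal.add_top_of_ne_bot (emul_ne_bot _ ht0 _ (hGbot x)),
            EReal.top_sub_coe]
        rw [htop]; exact le_top
      · set qx : ℝ := (Ψ x).toReal
        set qy : ℝ := (Ψ y).toReal
        have hx' : Ψ x = ((qx : ℝ) : EReal) := (EReal.coe_toReal hx (hΨbot x)).symm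
        have hy' : Ψ y = ((qy : ℝ) : EReal) := (EReal.coe_toReal hy (hΨbot y)).symm
        have h1 := hΨconv x y t ht0 ht1
        rw [hx', hy'] at h1
        have h1' : Ψ (t • x + (1 - t) • y) ≤ ((t * qx + (1 - t) * qy : ℝ) : EReal) :=
          h1.trans_eq (by norm_cast)
        have h2 : G (t • x + (1 - t) • y)
            ≤ ((t * qx + (1 - t) * qy
                + 1 / (2 * c) * ‖t • x + (1 - t) • y - w‖ ^ 2 : ℝ) : EReal) := by
          rw [hGdef]
          simp only
          exact (add_le_add_left h1' _).trans_eq (by norm_cast)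
        rw [hGval x hx, hGval y hy]
        refine h2.trans (le_of_eq ?_)
        rw [← EReal.coe_mul, ← EReal.coe_mul, ← EReal.coe_add, ← EReal.coe_sub,
          EReal.coe_eq_coe_iff]
        have hcw : t • x + (1 - t) • y - w = t • (x - w) + (1 - t) • (y - w) := by module
        have hn := norm_combo (x - w) (y - w) t
        rw [show x - w - (y - w) = x - y by abel] at hn
        rw [hcw, hn]
        field_simp
        ring
    obtain ⟨x, hxmin⟩ := exists_min G (1 / c) (by positivity) hGbot x0 hGtop hGlsc hGsc
    have hΨxt : Ψ x ≠ ⊤ := by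
      intro h
      have h1 := hxmin x0
      have h2 : G x = ⊤ := by rw [hGdef]; simp only; rw [h, EReal.top_add_coe]
      rw [h2] at h1
      exact hGtop (top_le_iff.1 h1)
    set qq : ℝ := (Ψ x).toReal
    have hqq : Ψ x = ((qq : ℝ) : EReal) := (EReal.coe_toReal hΨxt (hΨbot x)).symm
    set u : H := c⁻¹ • (w - x) with hu
    have hsubgrad : (x, u) ∈ subdiff Ψ := by
      intro h
      simp only
      by_cases hht : Ψ (x + h) = ⊤
      · rw [hht]; exact le_top
      set qh : ℝ := (Ψ (x + h)).toReal
      have hqh : Ψ (x + h) = ((qh : ℝ) : EReal) := (EReal.coe_toReal hht (hΨbot _)).symm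
      suffices hre : qq + ⟪u, h⟫ ≤ qh by
        rw [hqq, hqh]; exact_mod_cast hre
      have hstep : ∀ t : ℝ, 0 < t → t < 1 →
          qq + ⟪u, h⟫ ≤ qh + t / (2 * c) * ‖h‖ ^ 2 := by
        intro t ht0 ht1
        have h1 := hΨconv (x + h) x t ht0 ht1
        rw [show t • (x + h) + (1 - t) • x = x + t • h by module, hqq, hqh] at h1
        have h1' : Ψ (x + t • h) ≤ ((t * qh + (1 - t) * qq : ℝ) : EReal) :=
          h1.trans_eq (by norm_cast)
        have h2 := hxmin (x + t • h)
        have h3 : ((qq + 1 / (2 * c) * ‖x - w‖ ^ 2 : ℝ) : EReal)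
            ≤ ((t * qh + (1 - t) * qq + 1 / (2 * c) * ‖x + t • h - w‖ ^ 2 : ℝ) : EReal) := by
          calc ((qq + 1 / (2 * c) * ‖x - w‖ ^ 2 : ℝ) : EReal)
              = G x := by rw [hGval x hΨxt]
            _ ≤ G (x + t • h) := h2
            _ ≤ _ := by
                rw [hGdef]; simp only
                exact (add_le_add_left h1' _).trans_eq (by norm_cast)
        have h4 : qq + 1 / (2 * c) * ‖x - w‖ ^ 2
            ≤ t * qh + (1 - t) * qq + 1 / (2 * c) * ‖x + t • h - w‖ ^ 2 := by
          exact_mod_cast h3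
        have h5 : ‖x + t • h - w‖ ^ 2
            = ‖x - w‖ ^ 2 + 2 * (t * ⟪x - w, h⟫) + t ^ 2 * ‖h‖ ^ 2 := by
          rw [show x + t • h - w = (x - w) + t • h by abel, norm_add_sq_real,
            real_inner_smul_right, norm_smul, Real.norm_eq_abs, mul_pow, sq_abs]
        have h6 : ⟪u, h⟫ = c⁻¹ * (⟪w, h⟫ - ⟪x, h⟫) := by
          rw [hu, real_inner_smul_left, inner_sub_left]
        have h7 : ⟪x - w, h⟫ = ⟪x, h⟫ - ⟪w, h⟫ := inner_sub_left _ _ _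
        rw [h5] at h4
        have hE : 0 ≤ t * (qh - qq + c⁻¹ * (⟪x, h⟫ - ⟪w, h⟫) + t / (2 * c) * ‖h‖ ^ 2) := by
          have hc' : c ≠ 0 := ne_of_gt hc
          have hexp : t * (qh - qq + c⁻¹ * (⟪x, h⟫ - ⟪w, h⟫) + t / (2 * c) * ‖h‖ ^ 2)
              = (t * qh + (1 - t) * qq
                  + 1 / (2 * c) * (‖x - w‖ ^ 2 + 2 * (t * ⟪x - w, h⟫) + t ^ 2 * ‖h‖ ^ 2))
                - (qq + 1 / (2 * c) * ‖x - w‖ ^ 2) := by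
            rw [h7]; field_simp; ring
          rw [hexp]; linarith [h4]
        have hE' : 0 ≤ qh - qq + c⁻¹ * (⟪x, h⟫ - ⟪w, h⟫) + t / (2 * c) * ‖h‖ ^ 2 :=
          nonneg_of_mul_nonneg_right hE ht0
        rw [h6]
        linarith
      by_contra hcon
      push_neg at hcon
      set ε : ℝ := qq + ⟪u, h⟫ - qh with hε
      have hε0 : 0 < ε := by rw [hε]; linarith
      set t0 : ℝ := min (1 / 2) (ε * c / (‖h‖ ^ 2 + 1)) with ht0def
      have hh1 : (0:ℝ) < ‖h‖ ^ 2 + 1 := by positivity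
      have ht00 : 0 < t0 := lt_min (by norm_num) (by positivity)
      have ht01 : t0 < 1 := lt_of_le_of_lt (min_le_left _ _) (by norm_num)
      have hst := hstep t0 ht00 ht01
      have h3 : t0 * (‖h‖ ^ 2 + 1) ≤ ε * c := by
        rw [← le_div_iff₀ hh1]; exact min_le_right _ _
      have h4 : t0 * ‖h‖ ^ 2 < ε * c := by nlinarith
      have hlt : t0 / (2 * c) * ‖h‖ ^ 2 < ε := by
        rw [div_mul_eq_mul_div, div_lt_iff₀ (by positivity : (0:ℝ) < 2 * c)]
        nlinarith
      linarith
    refine ⟨x, x, c • u, rfl, ⟨u, hsubgrad, rfl⟩, ?_⟩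
    have hcu : c • u = w - x := by
      rw [hu, smul_smul, mul_inv_cancel₀ (ne_of_gt hc), one_smul]
    rw [hcu]; abel
  show MAccretive _
  rw [show (opAdd (subdiffL l Φ) (opSMul (-l) (idOp H))) = subdiff Ψ from hAeq]
  exact ⟨haccr, hrange⟩
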